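/- arXiv:math/0211043 — 4 statements merged into one kernel-verified Lean document; each statement's English description precedes it below -/
import Mathlib

section
/- If B is an orthonormal set of vectors in a Hilbert space H, X is a finite-dimensional linear subspace of H, and 0 < δ such that for every b ∈ B there exists x ∈ X with ‖b - x‖ < δ, then dim X ≥ (1 - δ²) · card(B). -/
set_option maxHeartbeats 1000000

/-- If `B` is an orthonormal set of vectors in a Hilbert space `H`,
`X` is a finite-dimensional linear subspace of `H`, and `0 < δ` is such that every
`b ∈ B` is within distance `< δ` of some element of `X`, then
`dim X ≥ (1 - δ²) · card B`. -/
theorem stmt_0 {H : Type*} [NormedAddCommGroup H] [InnerProductSpace ℂ H]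
    (B : Finset H) (hB : Orthonormal ℂ (fun b : (B : Set H) => (b : H)))
    (X : Submodule ℂ H) (hX : FiniteDimensional ℂ X)
    (δ : ℝ) (hδ : 0 < δ)
    (happrox : ∀ b ∈ B, ∃ x ∈ X, ‖b - x‖ < δ) :
    (1 - δ ^ 2) * (B.card : ℝ) ≤ (Module.finrank ℂ X : ℝ) := by
  classical
  haveI : CompleteSpace X := FiniteDimensional.complete ℂ X
  set n := Module.finrank ℂ X with hn
  set e : OrthonormalBasis (Fin n) ℂ X := stdOrthonormalBasis ℂ X with he
  set P := Submodule.orthogonalProjectionOnto X with hP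
  -- lower bound on ‖P b‖² for b ∈ B
  have key : ∀ b ∈ B, 1 - δ ^ 2 ≤ ‖(P b : H)‖ ^ 2 := by
    intro b hb
    obtain ⟨x, hx, hxd⟩ := happrox b hb
    have hnb : ‖b‖ = 1 := hB.1 ⟨b, by simpa using hb⟩
    have hmin : ‖b - (P b : H)‖ ≤ ‖b - x‖ := by
      rw [hP, ← Submodule.starProjection_apply, Submodule.starProjection_minimal]
      exact ciInf_le ⟨0, by rintro r ⟨y, rfl⟩; positivity⟩ (⟨x, hx⟩ : X)
    have h2 : (Submodule.orthogonalProjectionOnto Xᗮ b : H) = b - (P b : H) :=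
      eq_sub_of_add_eq' (X.starProjection_add_starProjection_orthogonal b)
    have hpyth : ‖b‖ ^ 2 = ‖(P b : H)‖ ^ 2 + ‖b - (P b : H)‖ ^ 2 := by
      rw [← h2, Submodule.norm_coe, Submodule.norm_coe]
      exact Submodule.norm_sq_eq_add_norm_sq_projection b X
    have hbx : ‖b - x‖ < δ := hxd
    have h3 : ‖b - (P b : H)‖ < δ := lt_of_le_of_lt hmin hbx
    have h4 : ‖b - (P b : H)‖ ^ 2 < δ ^ 2 :=
      pow_lt_pow_left₀ h3 (norm_nonneg _) two_ne_zero
    rw [hnb] at hpyth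
    linarith
  -- ‖P b‖² as sum of squared inner products with the basis of X
  have proj_sq : ∀ b : H, ‖(P b : H)‖ ^ 2 = ∑ i : Fin n, ‖(inner ℂ ((e i : H)) b : ℂ)‖ ^ 2 := by
    intro b
    have h1 : ‖(P b : H)‖ = ‖e.repr (P b)‖ := ((e.repr : X ≃ₗᵢ[ℂ] _).norm_map (P b)).symm
    have h2 : ∀ i, e.repr (P b) i = (inner ℂ ((e i : H)) b : ℂ) := by
      intro i
      rw [e.repr_apply_apply]
      exact Submodule.inner_orthogonalProjection_eq_of_mem_left (K := X) (e i) b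
    rw [h1, EuclideanSpace.norm_eq, Real.sq_sqrt (by positivity)]
    exact Finset.sum_congr rfl fun i _ => by rw [h2]
  -- Bessel's inequality per basis vector
  have bessel : ∀ i : Fin n, ∑ b ∈ B, ‖(inner ℂ ((e i : H)) b : ℂ)‖ ^ 2 ≤ 1 := by
    intro i
    have h1 : ∑ b : ((B : Set H) : Type _), ‖(inner ℂ ((b : H)) ((e i : H)) : ℂ)‖ ^ 2
        ≤ ‖(e i : H)‖ ^ 2 :=
      hB.sum_inner_products_le (x := (e i : H))
    have h2 : ‖(e i : H)‖ = 1 := by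
      rw [Submodule.norm_coe]; exact e.orthonormal.1 i
    rw [h2, one_pow, Finset.sum_finset_coe (fun b => ‖(inner ℂ (b : H) ((e i : H)) : ℂ)‖ ^ 2)]
      at h1
    calc ∑ b ∈ B, ‖(inner ℂ ((e i : H)) b : ℂ)‖ ^ 2
        = ∑ b ∈ B, ‖(inner ℂ (b : H) ((e i : H)) : ℂ)‖ ^ 2 :=
          Finset.sum_congr rfl fun b _ => by rw [← norm_inner_symm]
      _ ≤ 1 := h1
  -- combine
  have lower : (1 - δ ^ 2) * (B.card : ℝ) ≤ ∑ b ∈ B, ‖(P b : H)‖ ^ 2 := by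
    calc (1 - δ ^ 2) * (B.card : ℝ) = ∑ _b ∈ B, (1 - δ ^ 2) := by
          rw [Finset.sum_const, nsmul_eq_mul, mul_comm]
      _ ≤ ∑ b ∈ B, ‖(P b : H)‖ ^ 2 := Finset.sum_le_sum key
  have upper : ∑ b ∈ B, ‖(P b : H)‖ ^ 2 ≤ (n : ℝ) := by
    calc ∑ b ∈ B, ‖(P b : H)‖ ^ 2
        = ∑ b ∈ B, ∑ i : Fin n, ‖(inner ℂ ((e i : H)) b : ℂ)‖ ^ 2 :=
          Finset.sum_congr rfl fun b _ => proj_sq b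
      _ = ∑ i : Fin n, ∑ b ∈ B, ‖(inner ℂ ((e i : H)) b : ℂ)‖ ^ 2 := Finset.sum_comm
      _ ≤ ∑ _i : Fin n, (1 : ℝ) := Finset.sum_le_sum fun i _ => bessel i
      _ = (n : ℝ) := by simp
  linarith
end

section
/- Let L be a seminorm (possibly taking value +∞) on a unital C*-algebra A satisfying L(a*) = L(a) for all a. For states σ, ω on A, the supremum of |σ(a) - ω(a)| over {a : L(a) ≤ 1} equals the supremum of |σ(a) - ω(a)| over {a : L(a) ≤ 1 and a = a*}. -/
open scoped ENNReal NNReal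
open Complex NormedSpace Bornology

section herm

variable {A : Type*} [NormedRing A] [StarRing A] [CStarRing A]
    [NormedAlgebra ℂ A] [CompleteSpace A]

private lemma star_real_smul (r : ℝ) (x : A) : star (r • x) = r • star x :=
  map_real_smul (starAddEquiv (R := A)) continuous_star r x

private lemma herm_aux [Nontrivial A] (f : A →ₗ[ℂ] ℂ) (h1 : (f 1).im = 0)
    (hpos : ∀ a : A, (f (star a * a)).im = 0) :
    ∀ a : A, f (star a) = starRingEnd ℂ (f a) := by
  -- f is real on self-adjoint elements
  have hre : ∀ x : A, star x = x → (f x).im = 0 := by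
    intro x hx
    have h2 : star (x + 1) * (x + 1) = star x * x + (x + (x + 1)) := by
      rw [star_add, star_one, hx]; noncomm_ring
    have h3 := hpos (x + 1)
    rw [h2, map_add, map_add, map_add, Complex.add_im, Complex.add_im, Complex.add_im,
      hpos x, h1] at h3
    have : (f x).im = 0 := by linarith
    exact this
  set J : A := (I : ℂ) • 1 with hJ
  have hJmul : ∀ z : A, J * z = (I : ℂ) • z := by
    intro z; rw [hJ, smul_mul_assoc, one_mul]
  have hmulJ : ∀ z : A, z * J = (I : ℂ) • z := by
    intro z; rw [hJ, mul_smul_comm, mul_one]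
  have hJc : ∀ z : A, J * z = z * J := by intro z; rw [hJmul, hmulJ]
  have hJJ : J * J = -1 := by
    rw [hJmul, hJ, smul_smul, Complex.I_mul_I, neg_smul, one_smul]
  set u : A := star J with hu
  have hsu : star u = J := star_star J
  have huc : ∀ z : A, u * z = z * u := by
    intro z
    have h := congrArg star (hJc (star z))
    rw [star_mul, star_mul, star_star, ← hu] at h
    exact h.symm
  have huu : u * u = -1 := by
    rw [hu, ← star_mul, hJJ]; simp
  set w : A := -(J * u) with hw
  have hws : star w = w := by
    rw [hw, star_neg, star_mul, hsu, ← hu]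
  have hwc : ∀ z : A, w * z = z * w := by
    intro z
    have h : J * u * z = z * (J * u) := by
      rw [mul_assoc, huc z, ← mul_assoc, hJc z, mul_assoc]
    rw [hw, neg_mul, mul_neg, h]
  have hww : w * w = 1 := by
    have h5 : u * (J * u) = J * (u * u) := by rw [← mul_assoc, huc J, mul_assoc]
    rw [hw, neg_mul_neg, mul_assoc, h5, ← mul_assoc, hJJ, huu, neg_mul_neg, one_mul]
  have huJw : u = J * w := by
    rw [hw, mul_neg, ← mul_assoc, hJJ, neg_mul, one_mul, neg_neg]
  have hstar_one : ∀ c : ℂ, star (c • (1 : A)) = c.re • (1 : A) + c.im • u := by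
    intro c
    have hdec : c • (1 : A) = c.re • (1 : A) + c.im • J := by
      rw [← Complex.coe_smul, ← Complex.coe_smul, hJ, smul_smul, ← add_smul,
        Complex.re_add_im]
    rw [hdec, star_add, star_real_smul, star_real_smul, star_one, ← hu]
  have hstar_smul : ∀ (c : ℂ) (x : A),
      star (c • x) = star x * (c.re • (1 : A) + c.im • u) := by
    intro c x
    have h : c • x = (c • (1 : A)) * x := by rw [smul_mul_assoc, one_mul]
    rw [h, star_mul, hstar_one]
  -- Liouville step
  have hkey : ∀ x : A, x * (1 + w) = star x * (1 + w) := by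
    intro x
    set d : A := x * (1 + w) - star x * (1 + w) with hd
    have h1w : ∀ z : A, (1 + w) * z = z * (1 + w) := by
      intro z; rw [add_mul, mul_add, one_mul, mul_one, hwc]
    have hds : star d = -d := by
      rw [hd, star_sub, star_mul, star_mul, star_star, star_add, star_one, hws,
        h1w, h1w]
      exact (neg_sub _ _).symm
    have h2w : (1 + w) * w = 1 + w := by rw [add_mul, one_mul, hww, add_comm]
    have hdw : d * w = d := by
      rw [hd, sub_mul, mul_assoc, mul_assoc, h2w]
    have hdu : d * u = (I : ℂ) • d := by
      rw [huJw, ← mul_assoc, hmulJ, smul_mul_assoc, hdw]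
    have hsd : ∀ s : ℂ, star (s • d) = (-s) • d := by
      intro s
      have hstep : star (s • d) = -(d * (s.re • (1 : A) + s.im • u)) := by
        rw [hstar_smul, hds, neg_mul]
      rw [hstep, mul_add, mul_smul_comm, mul_smul_comm, mul_one, hdu,
        ← Complex.coe_smul, ← Complex.coe_smul, smul_smul, ← add_smul,
        Complex.re_add_im, ← neg_smul]
    have hEd : ∀ s : ℂ, ‖exp (s • d)‖ = 1 := by
      intro s
      have hcomm : Commute ((-s) • d) (s • d) :=
        ((Commute.refl d).smul_left (-s)).smul_right s
      have hmul : star (exp (s • d)) * exp (s • d) = 1 := by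
        letI : NormedAlgebra ℚ A := NormedAlgebra.restrictScalars ℚ ℂ A
        rw [star_exp, hsd, ← exp_add_of_commute hcomm, neg_smul, neg_add_cancel,
          NormedSpace.exp_zero]
      have h6 : ‖exp (s • d)‖ * ‖exp (s • d)‖ = 1 := by
        rw [← CStarRing.norm_star_mul_self, hmul, norm_one]
      nlinarith [norm_nonneg (exp (s • d))]
    have hdiff : Differentiable ℂ (fun s : ℂ => exp (s • d)) := fun s =>
      (hasDerivAt_exp_smul_const d s).differentiableAt
    have hbdd : IsBounded (Set.range fun s : ℂ => exp (s • d)) := by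
      have hsub : (Set.range fun s : ℂ => exp (s • d)) ⊆ Metric.closedBall 0 1 := by
        rintro y ⟨s, rfl⟩
        simp only [Metric.mem_closedBall, dist_zero_right]
        exact (hEd s).le
      exact Metric.isBounded_closedBall.subset hsub
    have hconst : (fun s : ℂ => exp (s • d)) = fun _ => exp ((0 : ℂ) • d) :=
      funext fun s => hdiff.apply_eq_apply_of_bounded hbdd s 0
    have hd0 : d = 0 := by
      have h7 := hasDerivAt_exp_smul_const (𝕂 := ℂ) d 0
      rw [hconst] at h7
      have h8 := h7.unique (hasDerivAt_const 0 _)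
      rwa [zero_smul, NormedSpace.exp_zero, one_mul] at h8
    have h9 : x * (1 + w) - star x * (1 + w) = 0 := by rw [← hd]; exact hd0
    exact sub_eq_zero.mp h9
  intro a
  have hE1 : ((f a).im + (f (star a)).im) = 0 := by
    have h := hre (a + star a) (by rw [star_add, star_star, add_comm])
    rwa [map_add, Complex.add_im] at h
  have h10 : star a * u = (I : ℂ) • (star a * w) := by
    rw [huJw, ← mul_assoc, hmulJ, smul_mul_assoc]
  have h11 : a * u = (I : ℂ) • (a * w) := by
    rw [huJw, ← mul_assoc, hmulJ, smul_mul_assoc]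
  have h9 : ((I : ℂ) * (f a + f (star a * w))).im = 0 := by
    have hy := hre (J * a + star (J * a)) (by rw [star_add, star_star, add_comm])
    rw [star_mul, ← hu, h10, hJmul, map_add, map_smul, map_smul, smul_eq_mul,
      smul_eq_mul, ← mul_add] at hy
    exact hy
  have h13 : ((I : ℂ) * (f (star a) + f (a * w))).im = 0 := by
    have hy := hre (J * star a + star (J * star a))
      (by rw [star_add, star_star, add_comm])
    rw [star_mul, star_star, ← hu, h11, hJmul, map_add, map_smul, map_smul,
      smul_eq_mul, smul_eq_mul, ← mul_add] at hy
    exact hy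
  have h14 : f a + f (a * w) = f (star a) + f (star a * w) := by
    have h := hkey a
    rw [mul_add, mul_add, mul_one, mul_one] at h
    calc f a + f (a * w) = f (a + a * w) := (map_add f _ _).symm
      _ = f (star a + star a * w) := by rw [h]
      _ = f (star a) + f (star a * w) := map_add f _ _
  have e2 : (f a).re + (f (star a * w)).re = 0 := by
    simpa [Complex.mul_im, Complex.add_re, Complex.add_im] using h9
  have e3 : (f (star a)).re + (f (a * w)).re = 0 := by
    simpa [Complex.mul_im, Complex.add_re, Complex.add_im] using h13
  have e4 : (f a).re + (f (a * w)).re = (f (star a)).re + (f (star a * w)).re := by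
    have := congrArg Complex.re h14
    simpa [Complex.add_re] using this
  refine Complex.ext ?_ ?_
  · simp only [Complex.conj_re]
    linarith
  · simp only [Complex.conj_im]
    linarith

end herm

/-- For an adjoint-invariant seminorm `L` (possibly taking the
value `+∞`) on a unital C*-algebra `A` and states `σ, ω` on `A`, the supremum of
`|σ(a) - ω(a)|` over `{a : L a ≤ 1}` equals the supremum over
`{a : L a ≤ 1 and a = a*}`. -/
theorem stmt_1 {A : Type*} [NormedRing A] [StarRing A] [CStarRing A]
    [NormedAlgebra ℂ A] [CompleteSpace A]
    (L : A → ℝ≥0∞)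
    (hadd : ∀ a b : A, L (a + b) ≤ L a + L b)
    (hsmul : ∀ (c : ℂ) (a : A), L (c • a) = ‖c‖₊ * L a)
    (hstar : ∀ a : A, L (star a) = L a)
    (σ ω : A →ₗ[ℂ] ℂ)
    (hσ1 : σ 1 = 1)
    (hσpos : ∀ a : A, 0 ≤ (σ (star a * a)).re ∧ (σ (star a * a)).im = 0)
    (hω1 : ω 1 = 1)
    (hωpos : ∀ a : A, 0 ≤ (ω (star a * a)).re ∧ (ω (star a * a)).im = 0) :
    sSup {x : ℝ | ∃ a : A, L a ≤ 1 ∧ x = ‖σ a - ω a‖} =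
      sSup {x : ℝ | ∃ a : A, L a ≤ 1 ∧ star a = a ∧ x = ‖σ a - ω a‖} := by
  have hnt : Nontrivial A := by
    refine ⟨1, 0, fun h => ?_⟩
    have h1 := hσ1
    rw [h, map_zero] at h1
    exact one_ne_zero h1.symm
  have hσherm := herm_aux σ (by rw [hσ1]; simp) (fun a => (hσpos a).2)
  have hωherm := herm_aux ω (by rw [hω1]; simp) (fun a => (hωpos a).2)
  have hset : {x : ℝ | ∃ a : A, L a ≤ 1 ∧ x = ‖σ a - ω a‖} =
      {x : ℝ | ∃ a : A, L a ≤ 1 ∧ star a = a ∧ x = ‖σ a - ω a‖} := by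
    apply Set.Subset.antisymm
    · rintro x ⟨a, hLa, rfl⟩
      set z : ℂ := σ a - ω a with hz
      set c : ℂ := if z = 0 then 1 else (‖z‖ : ℂ) / z with hc
      have hcnorm : ‖c‖ = 1 := by
        rw [hc]
        split_ifs with h
        · simp
        · rw [norm_div, Complex.norm_real, Real.norm_eq_abs,
            _root_.abs_of_nonneg (norm_nonneg z), div_self (norm_ne_zero_iff.mpr h)]
      have hcz : c * z = (‖z‖ : ℂ) := by
        rw [hc]
        split_ifs with h
        · simp [h]
        · rw [div_mul_cancel₀ _ h]
      set e : A := ((2⁻¹ : ℂ) * c) • a with he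
      refine ⟨e + star e, ?_, ?_, ?_⟩
      · refine le_trans (hadd _ _) ?_
        rw [hstar, he, hsmul]
        have hnn : ‖(2⁻¹ : ℂ) * c‖ = 2⁻¹ := by
          rw [norm_mul, hcnorm, mul_one]
          simp
        have hnn2 : ‖(2⁻¹ : ℂ) * c‖₊ = 2⁻¹ := by
          apply NNReal.coe_injective
          rw [coe_nnnorm, hnn]
          simp
        have hcast : ((2⁻¹ : ℝ≥0) : ℝ≥0∞) = 2⁻¹ := by
          rw [ENNReal.coe_inv two_ne_zero]
          norm_num
        rw [hnn2, hcast]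
        calc (2⁻¹ : ℝ≥0∞) * L a + 2⁻¹ * L a = (2⁻¹ + 2⁻¹) * L a := (add_mul _ _ _).symm
          _ = 1 * L a := by rw [ENNReal.inv_two_add_inv_two]
          _ = L a := one_mul _
          _ ≤ 1 := hLa
      · rw [star_add, star_star, add_comm]
      · have hφe : σ e - ω e = (2⁻¹ : ℂ) * (c * z) := by
          rw [he, map_smul, map_smul, smul_eq_mul, smul_eq_mul, ← mul_sub, ← hz,
            mul_assoc]
        have hφse : σ (star e) - ω (star e) = starRingEnd ℂ (σ e - ω e) := by
          rw [hσherm, hωherm, map_sub]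
        rw [map_add, map_add]
        have hsplit : σ e + σ (star e) - (ω e + ω (star e)) =
            (σ e - ω e) + (σ (star e) - ω (star e)) := by ring
        rw [hsplit, hφse, hφe, hcz]
        have hval : (2⁻¹ : ℂ) * (‖z‖ : ℂ) +
            starRingEnd ℂ ((2⁻¹ : ℂ) * (‖z‖ : ℂ)) = ((‖z‖ : ℝ) : ℂ) := by
          rw [map_mul, Complex.conj_ofReal]
          have : starRingEnd ℂ (2⁻¹ : ℂ) = 2⁻¹ := by
            rw [show ((2⁻¹ : ℂ)) = ((2⁻¹ : ℝ) : ℂ) by norm_num, Complex.conj_ofReal]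
          rw [this]
          ring
        rw [hval, Complex.norm_real, Real.norm_eq_abs, _root_.abs_of_nonneg (norm_nonneg z)]
    · rintro x ⟨a, hLa, _, rfl⟩
      exact ⟨a, hLa, rfl⟩
  rw [hset]
end

section
/- Let A and B be unital C*-algebras with Leibniz cLip-norms, α ∈ Aut(A), β ∈ Aut(B) bi-Lipschitz, φ : A → B a surjective unital *-homomorphism with φ∘α = β∘φ, and suppose ψ : B → A is a positive C*-norm contractive Lipschitz linear map with φ∘ψ = id_B. Then for every finite Ω ⊆ {b ∈ B : L_B(b) < ∞, ‖b‖ ≤ 1} and δ > 0 and n ≥ 1, D(Ω·β(Ω)⋯β^{n-1}(Ω), δ) ≤ D(ψ(Ω)·α(ψ(Ω))⋯α^{n-1}(ψ(Ω)), δ); consequently Entp_{L_B}(β) ≤ Entp_{L_A}(α). -/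
open scoped ENNReal

/-- `apxDimE Z δ`: the minimal dimension (in `ℝ≥0∞`) of a finite-dimensional
linear subspace approximately containing `Z` to within `δ`. -/
noncomputable def apxDimE {E : Type*} [NormedAddCommGroup E] [Module ℂ E]
    (Z : Set E) (δ : ℝ) : ℝ≥0∞ :=
  sInf {c : ℝ≥0∞ | ∃ Y : Submodule ℂ E, FiniteDimensional ℂ Y ∧
    c = (Module.finrank ℂ Y : ℝ≥0∞) ∧ ∀ z ∈ Z, ∃ y ∈ Y, ‖z - y‖ < δ}

/-- The set of products `a₀ · α(a₁) · α²(a₂) ⋯ α^{n-1}(a_{n-1})` with all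
`aᵢ ∈ Ω`. -/
def prodSet {A : Type*} [Monoid A] (α : A → A) (Ω : Set A) (n : ℕ) : Set A :=
  {x | ∃ a : Fin n → A, (∀ i, a i ∈ Ω) ∧
    x = (List.ofFn fun i : Fin n => α^[(i : ℕ)] (a i)).prod}

/-- The product entropy `Entp_L(α)`:
`sup_{Ω, δ} limsup_n (1/n) log D(Ω·α(Ω)⋯α^{n-1}(Ω), δ)`, the supremum being over
finite subsets `Ω` of `{a : L a < ∞, ‖a‖ ≤ 1}` and `δ > 0`. -/
noncomputable def entp {A : Type*} [NormedRing A] [NormedAlgebra ℂ A]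
    (L : A → ℝ≥0∞) (α : A → A) : EReal :=
  ⨆ (Ω : Finset A) (_ : ∀ a ∈ Ω, L a ≠ ⊤ ∧ ‖a‖ ≤ 1) (δ : ℝ) (_ : 0 < δ),
    Filter.limsup
      (fun n : ℕ => (((n : ℝ)⁻¹ : ℝ) : EReal) * ENNReal.log (apxDimE (prodSet α (↑Ω) n) δ))
      Filter.atTop

/-- A state on a unital C*-algebra: a unital positive linear functional. -/
def IsUState {A : Type*} [NormedRing A] [StarRing A] [NormedAlgebra ℂ A]
    (σ : A →ₗ[ℂ] ℂ) : Prop :=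
  σ 1 = 1 ∧ ∀ a : A, 0 ≤ (σ (star a * a)).re ∧ (σ (star a * a)).im = 0

/-- A cLip-norm on a unital C*-algebra (characterization of Proposition 2.4). -/
structure IsCLipNorm {A : Type*} [NormedRing A] [StarRing A] [NormedAlgebra ℂ A]
    (L : A → ℝ≥0∞) : Prop where
  add_le : ∀ a b : A, L (a + b) ≤ L a + L b
  smul_eq : ∀ (c : ℂ) (a : A), L (c • a) = ‖c‖₊ * L a
  star_eq : ∀ a : A, L (star a) = L a
  eq_zero_iff : ∀ a : A, L a = 0 ↔ ∃ c : ℂ, a = c • (1 : A)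
  separates : ∀ σ ω : A →ₗ[ℂ] ℂ, IsUState σ → IsUState ω → σ ≠ ω →
      ∃ a : A, L a ≠ ⊤ ∧ σ a ≠ ω a
  bddDiff : ∃ M : ℝ, ∀ σ ω : A →ₗ[ℂ] ℂ, IsUState σ → IsUState ω →
      ∀ a : A, L a ≤ 1 → ‖σ a - ω a‖ ≤ M
  totBdd : TotallyBounded {a : A | L a ≤ 1 ∧ ‖a‖ ≤ 1}


section Aux


variable {A' : Type*} [NormedRing A'] [StarRing A'] [CStarRing A']
    [NormedAlgebra ℂ A'] [CompleteSpace A']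
variable {B' : Type*} [NormedRing B'] [StarRing B'] [CStarRing B']
    [NormedAlgebra ℂ B'] [CompleteSpace B']

theorem mySpectralRadius {a : A'} (ha : IsSelfAdjoint a) :
    spectralRadius ℂ a = ‖a‖₊ := by
  have hconst : Filter.Tendsto (fun _n : ℕ => (‖a‖₊ : ℝ≥0∞)) Filter.atTop _ :=
    tendsto_const_nhds
  refine tendsto_nhds_unique ?_ hconst
  convert
    (spectrum.pow_nnnorm_pow_one_div_tendsto_nhds_spectralRadius (a : A')).comp
      (tendsto_pow_atTop_atTop_of_one_lt (α := ℕ) one_lt_two) using 1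
  refine funext fun n => ?_
  rw [Function.comp_apply, ha.nnnorm_pow_two_pow, ENNReal.coe_pow, ← ENNReal.rpow_natCast,
    ← ENNReal.rpow_mul]
  simp [Nat.cast_pow]

theorem myContr (φ : A' →⋆ₐ[ℂ] B') (a : A') : ‖φ a‖ ≤ ‖a‖ := by
  suffices h : ∀ {s : A'}, IsSelfAdjoint s → ‖φ s‖₊ ≤ ‖s‖₊ by
    have : ‖φ a‖₊ ≤ ‖a‖₊ := by
      refine nonneg_le_nonneg_of_sq_le_sq zero_le' ?_
      simp_rw [← CStarRing.nnnorm_star_mul_self, ← map_star, ← map_mul]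
      exact h (IsSelfAdjoint.star_mul_self a)
    exact_mod_cast this
  intro s hs
  have h1 : spectralRadius ℂ (φ s) ≤ spectralRadius ℂ s :=
    iSup_le_iSup_of_subset (AlgHom.spectrum_apply_subset φ.toAlgHom s)
  rwa [mySpectralRadius (hs.map φ), mySpectralRadius hs, ENNReal.coe_le_coe] at h1

end Aux

theorem apxDimE_le_of_image {E F : Type*} [NormedAddCommGroup E] [Module ℂ E]
    [NormedAddCommGroup F] [Module ℂ F] (f : E →ₗ[ℂ] F)
    (hf : ∀ x, ‖f x‖ ≤ ‖x‖) {Z : Set E} {W : Set F} (hW : W ⊆ f '' Z) (δ : ℝ) :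
    apxDimE W δ ≤ apxDimE Z δ := by
  refine le_sInf ?_
  rintro c ⟨Y, hfin, rfl, happ⟩
  have hfin' : FiniteDimensional ℂ (Y.map f) := Module.Finite.map Y f
  refine le_trans (sInf_le ⟨Y.map f, hfin', rfl, ?_⟩) ?_
  · intro w hw
    obtain ⟨z, hz, rfl⟩ := hW hw
    obtain ⟨y, hy, hyz⟩ := happ z hz
    exact ⟨f y, Submodule.mem_map_of_mem hy,
      by calc ‖f z - f y‖ = ‖f (z - y)‖ := by rw [map_sub]
           _ ≤ ‖z - y‖ := hf _
           _ < δ := hyz⟩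
  · exact_mod_cast Nat.cast_le.mpr (Submodule.finrank_map_le f Y)


/-- Let `A, B` be unital C*-algebras with Leibniz cLip-norms,
`α, β` bi-Lipschitz *-automorphisms, `φ : A → B` a surjective unital
*-homomorphism with `φ ∘ α = β ∘ φ`, and `ψ : B → A` a positive C*-norm
contractive Lipschitz linear map with `φ ∘ ψ = id`. Then for every finite
`Ω ⊆ {b : L_B b < ∞, ‖b‖ ≤ 1}`, `δ > 0` and `n ≥ 1`,
`D(Ω·β(Ω)⋯β^{n-1}(Ω), δ) ≤ D(ψ(Ω)·α(ψ(Ω))⋯α^{n-1}(ψ(Ω)), δ)`; consequently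
`Entp_{L_B}(β) ≤ Entp_{L_A}(α)`. -/

theorem stmt_16 {A : Type*} [NormedRing A] [StarRing A] [CStarRing A]
    [NormedAlgebra ℂ A] [CompleteSpace A] [PartialOrder A] [StarOrderedRing A]
    {B : Type*} [NormedRing B] [StarRing B] [CStarRing B]
    [NormedAlgebra ℂ B] [CompleteSpace B] [PartialOrder B] [StarOrderedRing B]
    (LA : A → ℝ≥0∞) (hLA : IsCLipNorm LA)
    (hleibA : ∀ a b : A, LA (a * b) ≤ LA a * ‖b‖₊ + ‖a‖₊ * LA b)
    (LB : B → ℝ≥0∞) (hLB : IsCLipNorm LB)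
    (hleibB : ∀ a b : B, LB (a * b) ≤ LB a * ‖b‖₊ + ‖a‖₊ * LB b)
    (α : A ≃⋆ₐ[ℂ] A) (β : B ≃⋆ₐ[ℂ] B)
    (lamA muA lamB muB : ℝ)
    (hαLip : ∀ a : A, LA (α a) ≤ ENNReal.ofReal lamA * LA a)
    (hαLip' : ∀ a : A, LA (α.symm a) ≤ ENNReal.ofReal muA * LA a)
    (hβLip : ∀ b : B, LB (β b) ≤ ENNReal.ofReal lamB * LB b)
    (hβLip' : ∀ b : B, LB (β.symm b) ≤ ENNReal.ofReal muB * LB b)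
    (φ : A →⋆ₐ[ℂ] B) (hφsurj : Function.Surjective φ)
    (hintertwine : ∀ a : A, φ (α a) = β (φ a))
    (hφind : ∀ b : B, LB b = ⨅ a : {a : A // φ a = b}, LA a.val)
    (ψ : B →ₗ[ℂ] A)
    (hψpos : ∀ b : B, 0 ≤ b → 0 ≤ ψ b)
    (hψcontr : ∀ b : B, ‖ψ b‖ ≤ ‖b‖)
    (c : ℝ) (hψLip : ∀ b : B, LA (ψ b) ≤ ENNReal.ofReal c * LB b)
    (hψsec : ∀ b : B, φ (ψ b) = b) :
    (∀ Ω : Finset B, (∀ b ∈ Ω, LB b ≠ ⊤ ∧ ‖b‖ ≤ 1) → ∀ δ : ℝ, 0 < δ →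
        ∀ n : ℕ, 1 ≤ n →
          apxDimE (prodSet ⇑β (↑Ω) n) δ ≤
            apxDimE (prodSet ⇑α (⇑ψ '' ↑Ω) n) δ) ∧
    entp LB ⇑β ≤ entp LA ⇑α := by
    classical
  -- φ is norm contractive
  have hφcontr : ∀ a : A, ‖φ a‖ ≤ ‖a‖ := myContr φ
  -- φ intertwines iterates
  have hiter : ∀ (k : ℕ) (a : A), φ ((⇑α)^[k] a) = (⇑β)^[k] (φ a) := by
    intro k
    induction k with
    | zero => intro a; simp
    | succ k ih =>
      intro a
      rw [Function.iterate_succ_apply', Function.iterate_succ_apply',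
        hintertwine, ih]
  -- the image inclusion
  have hincl : ∀ (Ω : Set B) (n : ℕ),
      prodSet ⇑β Ω n ⊆ φ.toLinearMap '' prodSet ⇑α (⇑ψ '' Ω) n := by
    intro Ω n x hx
    obtain ⟨b, hb, rfl⟩ := hx
    refine ⟨(List.ofFn fun i : Fin n => (⇑α)^[(i : ℕ)] (ψ (b i))).prod,
      ⟨fun i => ψ (b i), fun i => ⟨b i, hb i, rfl⟩, rfl⟩, ?_⟩
    show φ _ = _
    rw [map_list_prod]
    congr 1
    rw [List.map_ofFn]
    congr 1
    funext i
    simp only [Function.comp_apply, hiter, hψsec]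
  have key : ∀ (Ω : Set B) (δ : ℝ) (n : ℕ),
      apxDimE (prodSet ⇑β Ω n) δ ≤ apxDimE (prodSet ⇑α (⇑ψ '' Ω) n) δ :=
    fun Ω δ n => apxDimE_le_of_image φ.toLinearMap hφcontr (hincl Ω n) δ
  refine ⟨fun Ω _ δ _ n _ => key (↑Ω) δ n, ?_⟩
  -- entropy inequality
  refine iSup_le fun Ω => iSup_le fun hΩ => iSup_le fun δ => iSup_le fun hδ => ?_
  set Ω' : Finset A := Ω.image (fun b => ψ b) with hΩ'def
  have hΩ'mem : ∀ a ∈ Ω', LA a ≠ ⊤ ∧ ‖a‖ ≤ 1 := by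
    intro a ha
    obtain ⟨b, hb, rfl⟩ := Finset.mem_image.mp ha
    obtain ⟨hb1, hb2⟩ := hΩ b hb
    constructor
    · exact ne_top_of_le_ne_top (ENNReal.mul_ne_top ENNReal.ofReal_ne_top hb1)
        (hψLip b)
    · exact (hψcontr b).trans hb2
  have hcoe : (↑Ω' : Set A) = ⇑ψ '' ↑Ω := Finset.coe_image
  have hlim : Filter.limsup
      (fun n : ℕ => (((n : ℝ)⁻¹ : ℝ) : EReal) *
        ENNReal.log (apxDimE (prodSet ⇑β (↑Ω) n) δ)) Filter.atTop ≤
      Filter.limsup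
      (fun n : ℕ => (((n : ℝ)⁻¹ : ℝ) : EReal) *
        ENNReal.log (apxDimE (prodSet ⇑α (↑Ω') n) δ)) Filter.atTop := by
    refine Filter.limsup_le_limsup (Filter.Eventually.of_forall fun n => ?_)
    have h1 : ENNReal.log (apxDimE (prodSet ⇑β (↑Ω) n) δ) ≤
        ENNReal.log (apxDimE (prodSet ⇑α (↑Ω') n) δ) := by
      apply ENNReal.log_monotone
      rw [hcoe]
      exact key (↑Ω) δ n
    exact mul_le_mul_of_nonneg_left h1
      (by exact_mod_cast EReal.coe_nonneg.mpr (by positivity))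
  refine hlim.trans ?_
  unfold entp
  exact le_iSup_of_le Ω' (le_iSup_of_le hΩ'mem (le_iSup_of_le δ (le_iSup_of_le hδ le_rfl)))
end

section
/- Let A and B be unital C*-algebras with cLip-norms L_A, L_B, and let L be a cLip-norm on A ⊕ B inducing L_A and L_B via the coordinate projections (i.e., L_A(a) = inf{L(x) : x ∈ A⊕B, π_A(x) = a} and similarly for L_B). Then for all δ > 0, D(𝓛^{A⊕B}_1, δ) ≤ D(𝓛^A_1, δ) + D(𝓛^B_1, δ), where 𝓛^X_1 = {x : L_X(x) ≤ 1}. Consequently Mdim_L(A ⊕ B) = max(Mdim_{L_A}(A), Mdim_{L_B}(B)), where Mdim_L(A) = limsup_{δ→0⁺} log D(𝓛_1, δ)/log δ⁻¹. -/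
open scoped ENNReal

/-- The metric dimension `Mdim_L = limsup_{δ → 0⁺} log D(𝓛₁, δ) / log δ⁻¹`. -/
noncomputable def mdim {E : Type*} [NormedAddCommGroup E] [Module ℂ E]
    (U : Set E) : EReal :=
  Filter.limsup
    (fun δ : ℝ => (((Real.log δ⁻¹)⁻¹ : ℝ) : EReal) * ENNReal.log (apxDimE U δ))
    (nhdsWithin 0 (Set.Ioi 0))


section Aux

open Filter Topology

variable {E : Type*} [NormedAddCommGroup E] [Module ℂ E]
variable {F : Type*} [NormedAddCommGroup F] [Module ℂ F]

lemma apxDimE_zero_or_one_le (Z : Set E) (δ : ℝ) :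
    apxDimE Z δ = 0 ∨ 1 ≤ apxDimE Z δ := by
  rcases le_or_gt 1 (apxDimE Z δ) with h | h
  · exact Or.inr h
  · left
    obtain ⟨c, hc, hlt⟩ := sInf_lt_iff.1 h
    obtain ⟨Y, hfin, hceq, happ⟩ := hc
    have hn : Module.finrank ℂ Y < 1 := by
      rw [hceq] at hlt
      exact_mod_cast hlt
    have hc0 : c = 0 := by
      rw [hceq]
      norm_cast
      omega
    refine le_antisymm ?_ (zero_le)
    rw [← hc0]
    exact sInf_le ⟨Y, hfin, hceq, happ⟩

lemma apxDimE_prod_le (P : Set (E × F)) (U : Set E) (V : Set F)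
    (hmem : ∀ z ∈ P, z.1 ∈ U ∧ z.2 ∈ V) (δ : ℝ) :
    apxDimE P δ ≤ apxDimE U δ + apxDimE V δ := by
  have key : ∀ c ∈ {c : ℝ≥0∞ | ∃ Y : Submodule ℂ E, FiniteDimensional ℂ Y ∧
      c = (Module.finrank ℂ Y : ℝ≥0∞) ∧ ∀ z ∈ U, ∃ y ∈ Y, ‖z - y‖ < δ},
      ∀ d ∈ {c : ℝ≥0∞ | ∃ Y : Submodule ℂ F, FiniteDimensional ℂ Y ∧
      c = (Module.finrank ℂ Y : ℝ≥0∞) ∧ ∀ z ∈ V, ∃ y ∈ Y, ‖z - y‖ < δ},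
      apxDimE P δ ≤ c + d := by
    rintro c ⟨Y₁, h₁, rfl, ha₁⟩ d ⟨Y₂, h₂, rfl, ha₂⟩
    have hfin : FiniteDimensional ℂ (Y₁.prod Y₂) := by
      rw [LinearMap.prod_eq_sup_map]; infer_instance
    have hle : (Module.finrank ℂ (Y₁.prod Y₂) : ℝ≥0∞) ≤
        (Module.finrank ℂ Y₁ : ℝ≥0∞) + (Module.finrank ℂ Y₂ : ℝ≥0∞) := by
      have h' : Module.finrank ℂ (Y₁.prod Y₂) ≤
          Module.finrank ℂ Y₁ + Module.finrank ℂ Y₂ := by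
        rw [LinearMap.prod_eq_sup_map]
        refine (Submodule.finrank_add_le_finrank_add_finrank _ _).trans ?_
        exact add_le_add (Submodule.finrank_map_le _ _) (Submodule.finrank_map_le _ _)
      exact_mod_cast h'
    refine le_trans (sInf_le ⟨Y₁.prod Y₂, hfin, rfl, ?_⟩) hle
    rintro ⟨a, b⟩ hz
    obtain ⟨hU, hV⟩ := hmem _ hz
    obtain ⟨y₁, hy₁, hny₁⟩ := ha₁ a hU
    obtain ⟨y₂, hy₂, hny₂⟩ := ha₂ b hV
    refine ⟨(y₁, y₂), Submodule.mem_prod.2 ⟨hy₁, hy₂⟩, ?_⟩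
    have heq : ((a, b) - (y₁, y₂) : E × F) = (a - y₁, b - y₂) := rfl
    rw [heq, Prod.norm_def]
    exact max_lt hny₁ hny₂
  show sInf _ ≤ apxDimE U δ + apxDimE V δ
  rw [apxDimE, apxDimE, ENNReal.sInf_add]
  refine le_iInf₂ fun c hc => ?_
  rw [add_comm, ENNReal.sInf_add]
  exact le_iInf₂ fun d hd => (key c hc d hd).trans_eq (add_comm _ _)

lemma apxDimE_le_of_proj (π : E →ₗ[ℂ] F) (hπ : ∀ x, ‖π x‖ ≤ ‖x‖)
    (P : Set E) (U : Set F)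
    (hU : ∀ a ∈ U, ∀ ε : ℝ, 0 < ε → ∃ z ∈ P, ‖a - π z‖ < ε)
    {δ δ' : ℝ} (hlt : δ' < δ) :
    apxDimE U δ ≤ apxDimE P δ' := by
  refine le_sInf fun c hc => ?_
  obtain ⟨Y, hfin, rfl, happ⟩ := hc
  refine le_trans (sInf_le ⟨Y.map π, inferInstance, rfl, ?_⟩)
    (by exact_mod_cast Submodule.finrank_map_le π Y)
  intro a ha
  obtain ⟨z, hz, hnz⟩ := hU a ha (δ - δ') (by linarith)
  obtain ⟨y, hy, hny⟩ := happ z hz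
  refine ⟨π y, Submodule.mem_map_of_mem hy, ?_⟩
  have h1 : ‖a - π y‖ ≤ ‖a - π z‖ + ‖π z - π y‖ := by
    have := dist_triangle a (π z) (π y)
    simpa [dist_eq_norm] using this
  have h2 : ‖π z - π y‖ ≤ ‖z - y‖ := by
    rw [← map_sub]; exact hπ _
  linarith

lemma tendsto_half :
    Tendsto (fun δ : ℝ => δ / 2) (nhdsWithin 0 (Set.Ioi 0)) (nhdsWithin 0 (Set.Ioi 0)) := by
  apply tendsto_nhdsWithin_of_tendsto_nhds_of_eventually_within
  · have h : Tendsto (fun δ : ℝ => δ / 2) (nhds 0) (nhds 0) := by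
      simpa using (continuous_id.div_const (2:ℝ)).tendsto (0:ℝ)
    exact h.mono_left nhdsWithin_le_nhds
  · filter_upwards [self_mem_nhdsWithin] with δ hδ
    have : (0:ℝ) < δ := hδ
    exact Set.mem_Ioi.2 (by positivity)

lemma ev_log (T : ℝ) : ∀ᶠ δ in nhdsWithin (0:ℝ) (Set.Ioi 0),
    0 < δ ∧ 0 < Real.log δ⁻¹ ∧ T < Real.log δ⁻¹ := by
  have h1 : Tendsto (fun δ : ℝ => Real.log δ⁻¹) (nhdsWithin (0:ℝ) (Set.Ioi 0)) atTop :=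
    Real.tendsto_log_atTop.comp tendsto_inv_nhdsGT_zero
  filter_upwards [self_mem_nhdsWithin, h1.eventually (eventually_gt_atTop (max T 0))]
    with δ h2 h3
  exact ⟨h2, (le_max_right T 0).trans_lt h3, (le_max_left T 0).trans_lt h3⟩

lemma limsup_le_helper {f : ℝ → EReal} {y : EReal}
    (h1 : ∀ c : ℝ, max y 0 < (c : EReal) →
      ∀ᶠ δ in nhdsWithin (0:ℝ) (Set.Ioi 0), f δ ≤ (c : EReal))
    (h2 : y < 0 → ∀ᶠ δ in nhdsWithin (0:ℝ) (Set.Ioi 0), f δ ≤ ⊥) :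
    Filter.limsup f (nhdsWithin (0:ℝ) (Set.Ioi 0)) ≤ y := by
  rcases lt_or_ge y 0 with hy | hy
  · exact le_trans (limsup_le_of_le (by isBoundedDefault) (h2 hy)) bot_le
  · rw [← max_eq_left hy]
    exact EReal.le_of_forall_lt_iff_le.1
      (fun c hc => limsup_le_of_le (by isBoundedDefault) (h1 c hc))

lemma eventually_apx_zero {U : Set E} (h : mdim U < 0) :
    ∀ᶠ δ in nhdsWithin (0:ℝ) (Set.Ioi 0), apxDimE U δ = 0 := by
  obtain ⟨c, h1, h2⟩ := EReal.exists_between_coe_real h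
  unfold mdim at h1
  filter_upwards [eventually_lt_of_limsup_lt h1, ev_log 0] with δ hterm hδ
  obtain ⟨hδpos, hapos, -⟩ := hδ
  rcases apxDimE_zero_or_one_le U δ with h0 | h1'
  · exact h0
  · exfalso
    have hX : (0:EReal) ≤ ENNReal.log (apxDimE U δ) := by
      simpa using ENNReal.log_monotone h1'
    have hc0 : (0:EReal) ≤ (((Real.log δ⁻¹)⁻¹ : ℝ) : EReal) := by
      exact_mod_cast (inv_pos.2 hapos).le
    have hterm0 : (0:EReal) ≤ (((Real.log δ⁻¹)⁻¹ : ℝ) : EReal)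
        * ENNReal.log (apxDimE U δ) := by
      simpa using mul_le_mul_of_nonneg_left hX hc0
    exact absurd (hterm0.trans_lt (hterm.trans h2)) (lt_irrefl _)

lemma mdim_le_of_apx {U : Set E} {V : Set F}
    (h : ∀ δ : ℝ, 0 < δ → apxDimE U δ ≤ apxDimE V (δ / 2)) :
    mdim U ≤ mdim V := by
  rcases eq_or_ne (mdim V) ⊤ with htop | htop
  · rw [htop]; exact le_top
  unfold mdim
  apply limsup_le_helper
  · intro c hc
    obtain ⟨c', hc1, hc2⟩ := EReal.exists_between_coe_real hc
    have hc'pos : 0 < c' := by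
      have h0 : ((0:ℝ) : EReal) < (c' : EReal) := lt_of_le_of_lt (le_max_right _ _) hc1
      exact_mod_cast h0
    have hcc' : c' < c := by exact_mod_cast hc2
    set s : ℝ := c / c' with hs_def
    have hs : 1 < s := (one_lt_div hc'pos).2 hcc'
    have hMc' : Filter.limsup
        (fun δ : ℝ => (((Real.log δ⁻¹)⁻¹ : ℝ) : EReal) * ENNReal.log (apxDimE V δ))
        (nhdsWithin (0:ℝ) (Set.Ioi 0)) < (c' : EReal) :=
      lt_of_le_of_lt (le_max_left _ _) hc1
    filter_upwards [ev_log (Real.log 2 / (s - 1)),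
      tendsto_half.eventually (eventually_lt_of_limsup_lt hMc')] with δ hδ hg
    obtain ⟨hδpos, hapos, haT⟩ := hδ
    set a := Real.log δ⁻¹ with ha_def
    have hbeq : Real.log (δ/2)⁻¹ = Real.log 2 + a := by
      rw [inv_div, Real.log_div two_ne_zero hδpos.ne', ha_def, Real.log_inv]; ring
    rcases apxDimE_zero_or_one_le V (δ/2) with h0 | h1
    · have hU0 : apxDimE U δ = 0 :=
        le_antisymm (le_trans (h δ hδpos) (le_of_eq h0)) (zero_le)
      rw [hU0, ENNReal.log_zero, EReal.coe_mul_bot_of_pos (inv_pos.2 hapos)]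
      exact bot_le
    · have hbpos : 0 < Real.log 2 + a := by
        have := Real.log_pos one_lt_two; linarith
      rw [hbeq] at hg
      have hXnonneg : (0:EReal) ≤ ENNReal.log (apxDimE V (δ/2)) := by
        simpa using ENNReal.log_monotone h1
      have hXtop : ENNReal.log (apxDimE V (δ/2)) ≠ ⊤ := by
        intro hT
        rw [hT, EReal.coe_mul_top_of_pos (inv_pos.2 hbpos)] at hg
        exact not_top_lt hg
      have hXbot : ENNReal.log (apxDimE V (δ/2)) ≠ ⊥ := by
        intro hB; rw [hB] at hXnonneg; simp at hXnonneg
      set x := (ENNReal.log (apxDimE V (δ/2))).toReal with hx_def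
      have hx : (x : EReal) = ENNReal.log (apxDimE V (δ/2)) := EReal.coe_toReal hXtop hXbot
      rw [← hx, ← EReal.coe_mul, EReal.coe_lt_coe_iff] at hg
      have hx0 : 0 ≤ x := by
        rw [← hx] at hXnonneg; exact_mod_cast hXnonneg
      have hUle : ENNReal.log (apxDimE U δ) ≤ (x : EReal) := by
        rw [hx]; exact ENNReal.log_monotone (h δ hδpos)
      have hc0 : (0:EReal) ≤ ((a⁻¹ : ℝ) : EReal) := by
        exact_mod_cast (inv_pos.2 hapos).le
      calc ((a⁻¹ : ℝ) : EReal) * ENNReal.log (apxDimE U δ)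
          ≤ ((a⁻¹ : ℝ) : EReal) * (x : EReal) := mul_le_mul_of_nonneg_left hUle hc0
        _ = ((a⁻¹ * x : ℝ) : EReal) := (EReal.coe_mul _ _).symm
        _ ≤ (c : EReal) := by
            rw [EReal.coe_le_coe_iff]
            have hb'' : x ≤ (Real.log 2 + a) * c' := by
              have h' := mul_le_mul_of_nonneg_left hg.le hbpos.le
              rwa [← mul_assoc, mul_inv_cancel₀ hbpos.ne', one_mul] at h'
            have hbs : Real.log 2 + a ≤ s * a := by
              have h' := (div_lt_iff₀ (by linarith : (0:ℝ) < s - 1)).1 haT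
              nlinarith
            have hxs : x ≤ s * a * c' :=
              hb''.trans (mul_le_mul_of_nonneg_right hbs hc'pos.le)
            calc a⁻¹ * x ≤ a⁻¹ * (s * a * c') :=
                  mul_le_mul_of_nonneg_left hxs (inv_pos.2 hapos).le
              _ = s * c' := by
                  rw [show s * a * c' = a * (s * c') by ring, ← mul_assoc,
                    inv_mul_cancel₀ hapos.ne', one_mul]
              _ = c := by rw [hs_def, div_mul_cancel₀ _ hc'pos.ne']
  · intro hneg
    filter_upwards [ev_log 0, tendsto_half.eventually (eventually_apx_zero hneg)]
      with δ hδ h0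
    obtain ⟨hδpos, hapos, -⟩ := hδ
    have hU0 : apxDimE U δ = 0 :=
      le_antisymm (le_trans (h δ hδpos) (le_of_eq h0)) (zero_le)
    rw [hU0, ENNReal.log_zero, EReal.coe_mul_bot_of_pos (inv_pos.2 hapos)]

lemma mdim_le_max {W : Set (E × F)} {U : Set E} {V : Set F}
    (h : ∀ δ : ℝ, 0 < δ → apxDimE W δ ≤ apxDimE U δ + apxDimE V δ) :
    mdim W ≤ max (mdim U) (mdim V) := by
  rcases eq_or_ne (max (mdim U) (mdim V)) ⊤ with htop | htop
  · rw [htop]; exact le_top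
  unfold mdim
  unfold mdim at htop
  apply limsup_le_helper
  · intro c hc
    obtain ⟨c', hc1, hc2⟩ := EReal.exists_between_coe_real hc
    have hc'pos : 0 < c' := by
      have h0 : ((0:ℝ) : EReal) < (c' : EReal) := lt_of_le_of_lt (le_max_right _ _) hc1
      exact_mod_cast h0
    have hcc' : c' < c := by exact_mod_cast hc2
    have hU' := lt_of_le_of_lt ((le_max_left _ _).trans (le_max_left _ _)) hc1
    have hV' := lt_of_le_of_lt ((le_max_right _ _).trans (le_max_left _ _)) hc1
    filter_upwards [ev_log (Real.log 2 / (c - c')),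
      eventually_lt_of_limsup_lt hU', eventually_lt_of_limsup_lt hV'] with δ hδ htU htV
    obtain ⟨hδpos, hapos, haT⟩ := hδ
    set a := Real.log δ⁻¹ with ha_def
    have hc0 : (0:EReal) ≤ ((a⁻¹ : ℝ) : EReal) := by
      exact_mod_cast (inv_pos.2 hapos).le
    have claim : ∀ D : ℝ≥0∞, (D = 0 ∨ 1 ≤ D) →
        ((a⁻¹ : ℝ) : EReal) * ENNReal.log D < (c' : EReal) →
        ENNReal.log D ≤ ((a * c' : ℝ) : EReal) := by
      rintro D (rfl | h1) hlt
      · rw [ENNReal.log_zero]; exact bot_le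
      · have hX0 : (0:EReal) ≤ ENNReal.log D := by
          simpa using ENNReal.log_monotone h1
        have hXtop : ENNReal.log D ≠ ⊤ := by
          intro hT
          rw [hT, EReal.coe_mul_top_of_pos (inv_pos.2 hapos)] at hlt
          exact not_top_lt hlt
        have hXbot : ENNReal.log D ≠ ⊥ := by
          intro hB; rw [hB] at hX0; simp at hX0
        have hx : ((ENNReal.log D).toReal : EReal) = ENNReal.log D :=
          EReal.coe_toReal hXtop hXbot
        rw [← hx, ← EReal.coe_mul, EReal.coe_lt_coe_iff] at hlt
        rw [← hx, EReal.coe_le_coe_iff]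
        have h' := mul_le_mul_of_nonneg_left hlt.le hapos.le
        rwa [← mul_assoc, mul_inv_cancel₀ hapos.ne', one_mul] at h'
    have hXU := claim _ (apxDimE_zero_or_one_le U δ) htU
    have hXV := claim _ (apxDimE_zero_or_one_le V δ) htV
    by_cases hz : apxDimE U δ = 0 ∧ apxDimE V δ = 0
    · have hW0 : apxDimE W δ = 0 := by
        refine le_antisymm ?_ (zero_le)
        calc apxDimE W δ ≤ apxDimE U δ + apxDimE V δ := h δ hδpos
          _ = 0 := by rw [hz.1, hz.2, add_zero]
      rw [hW0, ENNReal.log_zero, EReal.coe_mul_bot_of_pos (inv_pos.2 hapos)]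
      exact bot_le
    · set m := max (apxDimE U δ) (apxDimE V δ) with hm_def
      have hm1 : (1:ℝ≥0∞) ≤ m := by
        rcases apxDimE_zero_or_one_le U δ with h0 | h1
        · rcases apxDimE_zero_or_one_le V δ with h0' | h1'
          · exact absurd ⟨h0, h0'⟩ hz
          · exact h1'.trans (le_max_right _ _)
        · exact h1.trans (le_max_left _ _)
      have hlogm : ENNReal.log m ≤ ((a * c' : ℝ) : EReal) := by
        rw [hm_def, ENNReal.log_monotone.map_max]
        exact max_le hXU hXV
      have hWle : apxDimE W δ ≤ 2 * m := by
        refine (h δ hδpos).trans ?_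
        calc apxDimE U δ + apxDimE V δ ≤ m + m :=
              add_le_add (le_max_left _ _) (le_max_right _ _)
          _ = 2 * m := (two_mul m).symm
      have hlog2 : ENNReal.log 2 = ((Real.log 2 : ℝ) : EReal) := by
        rw [show (2:ℝ≥0∞) = ENNReal.ofReal 2 by simp,
          ENNReal.log_ofReal_of_pos two_pos]
      have hlogW : ENNReal.log (apxDimE W δ) ≤ ((Real.log 2 + a * c' : ℝ) : EReal) := by
        refine (ENNReal.log_monotone hWle).trans ?_
        rw [ENNReal.log_mul_add, hlog2]
        calc ((Real.log 2 : ℝ) : EReal) + ENNReal.log m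
            ≤ ((Real.log 2 : ℝ) : EReal) + ((a * c' : ℝ) : EReal) :=
              add_le_add_right hlogm _
          _ = ((Real.log 2 + a * c' : ℝ) : EReal) := by
              rw [← EReal.coe_add]
      calc ((a⁻¹ : ℝ) : EReal) * ENNReal.log (apxDimE W δ)
          ≤ ((a⁻¹ : ℝ) : EReal) * ((Real.log 2 + a * c' : ℝ) : EReal) :=
            mul_le_mul_of_nonneg_left hlogW hc0
        _ = ((a⁻¹ * (Real.log 2 + a * c') : ℝ) : EReal) := (EReal.coe_mul _ _).symm
        _ ≤ (c : EReal) := by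
            rw [EReal.coe_le_coe_iff]
            have h1 : Real.log 2 < a * (c - c') :=
              (div_lt_iff₀ (by linarith : (0:ℝ) < c - c')).1 haT
            have h2 : a⁻¹ * (Real.log 2 + a * c') ≤ a⁻¹ * (a * (c - c') + a * c') := by
              apply mul_le_mul_of_nonneg_left (by linarith) (inv_pos.2 hapos).le
            have h3 : a⁻¹ * (a * (c - c') + a * c') = c := by
              rw [show a * (c - c') + a * c' = a * c by ring, ← mul_assoc,
                inv_mul_cancel₀ hapos.ne', one_mul]
            linarith
  · intro hneg
    rw [max_lt_iff] at hneg
    filter_upwards [ev_log 0, eventually_apx_zero hneg.1, eventually_apx_zero hneg.2]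
      with δ hδ h0U h0V
    obtain ⟨hδpos, hapos, -⟩ := hδ
    have hW0 : apxDimE W δ = 0 := by
      refine le_antisymm ?_ (zero_le)
      calc apxDimE W δ ≤ apxDimE U δ + apxDimE V δ := h δ hδpos
        _ = 0 := by rw [h0U, h0V, add_zero]
    rw [hW0, ENNReal.log_zero, EReal.coe_mul_bot_of_pos (inv_pos.2 hapos)]

end Aux


/-- Let `L` be a cLip-norm on `A ⊕ B` inducing the cLip-norms
`L_A` and `L_B` via the coordinate projections. Then for all `δ > 0`,
`D(𝓛^{A⊕B}₁, δ) ≤ D(𝓛^A₁, δ) + D(𝓛^B₁, δ)`; consequently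
`Mdim_L(A ⊕ B) = max (Mdim_{L_A}(A), Mdim_{L_B}(B))`. -/

theorem stmt_18 {A : Type*} [NormedRing A] [StarRing A] [CStarRing A]
    [NormedAlgebra ℂ A] [CompleteSpace A]
    {B : Type*} [NormedRing B] [StarRing B] [CStarRing B]
    [NormedAlgebra ℂ B] [CompleteSpace B]
    (L : A × B → ℝ≥0∞) (hL : IsCLipNorm L)
    (LA : A → ℝ≥0∞) (hLA : IsCLipNorm LA)
    (LB : B → ℝ≥0∞) (hLB : IsCLipNorm LB)
    (hindA : ∀ a : A, LA a = ⨅ b : B, L (a, b))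
    (hindB : ∀ b : B, LB b = ⨅ a : A, L (a, b)) :
    (∀ δ : ℝ, 0 < δ →
        apxDimE {x : A × B | L x ≤ 1} δ ≤
          apxDimE {a : A | LA a ≤ 1} δ + apxDimE {b : B | LB b ≤ 1} δ) ∧
    mdim {x : A × B | L x ≤ 1} =
      max (mdim {a : A | LA a ≤ 1}) (mdim {b : B | LB b ≤ 1}) := by
  have hmem : ∀ z ∈ {x : A × B | L x ≤ 1},
      z.1 ∈ {a : A | LA a ≤ 1} ∧ z.2 ∈ {b : B | LB b ≤ 1} := by
    rintro ⟨a, b⟩ hz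
    constructor
    · show LA a ≤ 1
      rw [hindA]
      exact le_trans (iInf_le _ b) hz
    · show LB b ≤ 1
      rw [hindB]
      exact le_trans (iInf_le _ a) hz
  have hprod := apxDimE_prod_le {x : A × B | L x ≤ 1} {a : A | LA a ≤ 1}
    {b : B | LB b ≤ 1} hmem
  refine ⟨fun δ _ => hprod δ, ?_⟩
  refine le_antisymm (mdim_le_max fun δ _ => hprod δ) (max_le ?_ ?_)
  · refine mdim_le_of_apx fun δ hδ => ?_
    refine apxDimE_le_of_proj (LinearMap.fst ℂ A B) (fun x => norm_fst_le x) _ _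
      ?_ (by linarith : δ / 2 < δ)
    intro a ha ε hε
    set t : ℝ := min (1/2) (ε / (2 * (‖a‖ + 1))) with ht_def
    have hεa : 0 < ε / (2 * (‖a‖ + 1)) := by positivity
    have ht0 : 0 < t := lt_min (by norm_num) hεa
    have ht1 : t < 1 := lt_of_le_of_lt (min_le_left _ _) (by norm_num)
    have hLa' : LA ((((1 - t : ℝ)) : ℂ) • a) < 1 := by
      rw [hLA.smul_eq]
      have hnorm : (‖((1 - t : ℝ) : ℂ)‖₊ : ℝ≥0∞) < 1 := by
        rw [Complex.nnnorm_real]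
        rw [ENNReal.coe_lt_one_iff]
        have : ‖(1 - t : ℝ)‖ < 1 := by
          rw [Real.norm_eq_abs, abs_of_nonneg (by linarith)]; linarith
        exact_mod_cast this
      calc (‖((1 - t : ℝ) : ℂ)‖₊ : ℝ≥0∞) * LA a
          ≤ (‖((1 - t : ℝ) : ℂ)‖₊ : ℝ≥0∞) * 1 := mul_le_mul_right ha _
        _ = (‖((1 - t : ℝ) : ℂ)‖₊ : ℝ≥0∞) := mul_one _
        _ < 1 := hnorm
    rw [hindA] at hLa'
    obtain ⟨b, hb⟩ := iInf_lt_iff.1 hLa'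
    refine ⟨((((1 - t : ℝ)) : ℂ) • a, b), le_of_lt hb, ?_⟩
    show ‖a - (((1 - t : ℝ) : ℂ) • a)‖ < ε
    have heq : a - (((1 - t : ℝ)) : ℂ) • a = (((t : ℝ)) : ℂ) • a := by
      calc a - (((1 - t : ℝ)) : ℂ) • a = (1 : ℂ) • a - (((1 - t : ℝ)) : ℂ) • a := by
            rw [one_smul]
        _ = ((1 : ℂ) - (((1 - t : ℝ)) : ℂ)) • a := (sub_smul _ _ _).symm
        _ = (((t : ℝ)) : ℂ) • a := by norm_num
    rw [heq, norm_smul, Complex.norm_real, Real.norm_eq_abs, abs_of_nonneg ht0.le]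
    calc t * ‖a‖ ≤ (ε / (2 * (‖a‖ + 1))) * ‖a‖ :=
          mul_le_mul_of_nonneg_right (min_le_right _ _) (norm_nonneg a)
      _ < ε := by
          rw [div_mul_eq_mul_div, div_lt_iff₀ (by positivity)]
          nlinarith [norm_nonneg a]
  · refine mdim_le_of_apx fun δ hδ => ?_
    refine apxDimE_le_of_proj (LinearMap.snd ℂ A B) (fun x => norm_snd_le x) _ _
      ?_ (by linarith : δ / 2 < δ)
    intro b hb ε hε
    set t : ℝ := min (1/2) (ε / (2 * (‖b‖ + 1))) with ht_def
    have hεa : 0 < ε / (2 * (‖b‖ + 1)) := by positivity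
    have ht0 : 0 < t := lt_min (by norm_num) hεa
    have ht1 : t < 1 := lt_of_le_of_lt (min_le_left _ _) (by norm_num)
    have hLb' : LB ((((1 - t : ℝ)) : ℂ) • b) < 1 := by
      rw [hLB.smul_eq]
      have hnorm : (‖((1 - t : ℝ) : ℂ)‖₊ : ℝ≥0∞) < 1 := by
        rw [Complex.nnnorm_real]
        rw [ENNReal.coe_lt_one_iff]
        have : ‖(1 - t : ℝ)‖ < 1 := by
          rw [Real.norm_eq_abs, abs_of_nonneg (by linarith)]; linarith
        exact_mod_cast this
      calc (‖((1 - t : ℝ) : ℂ)‖₊ : ℝ≥0∞) * LB b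
          ≤ (‖((1 - t : ℝ) : ℂ)‖₊ : ℝ≥0∞) * 1 := mul_le_mul_right hb _
        _ = (‖((1 - t : ℝ) : ℂ)‖₊ : ℝ≥0∞) := mul_one _
        _ < 1 := hnorm
    rw [hindB] at hLb'
    obtain ⟨a, hab⟩ := iInf_lt_iff.1 hLb'
    refine ⟨(a, (((1 - t : ℝ)) : ℂ) • b), le_of_lt hab, ?_⟩
    show ‖b - (((1 - t : ℝ) : ℂ) • b)‖ < ε
    have heq : b - (((1 - t : ℝ)) : ℂ) • b = (((t : ℝ)) : ℂ) • b := by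
      calc b - (((1 - t : ℝ)) : ℂ) • b = (1 : ℂ) • b - (((1 - t : ℝ)) : ℂ) • b := by
            rw [one_smul]
        _ = ((1 : ℂ) - (((1 - t : ℝ)) : ℂ)) • b := (sub_smul _ _ _).symm
        _ = (((t : ℝ)) : ℂ) • b := by norm_num
    rw [heq, norm_smul, Complex.norm_real, Real.norm_eq_abs, abs_of_nonneg ht0.le]
    calc t * ‖b‖ ≤ (ε / (2 * (‖b‖ + 1))) * ‖b‖ :=
          mul_le_mul_of_nonneg_right (min_le_right _ _) (norm_nonneg b)
      _ < ε := by
          rw [div_mul_eq_mul_div, div_lt_iff₀ (by positivity)]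
          nlinarith [norm_nonneg b]
end
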